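/- Let 0 < p ≤ q ≤ 2 and let g: ℝ → ℂ be a function with g(0) = 0 satisfying |g(ω₂) - g(ω₁)| ≤ κ₁ h_p(ω₁,ω₂) + κ₂ h_q(ω₁,ω₂) for all ω₁, ω₂, where h_r(x,y) = sqrt((|x|^r+|y|^r)|x-y|^r). Then the functional G(φ) = ∫_{ℝ^d} g(φ(r)) dr is well-defined on L^p ∩ L^q and satisfies |G(φ) - G(ψ)| ≤ κ₁ H_p(φ,ψ) + κ₂ H_q(φ,ψ), where H_r(φ,ψ) = sqrt((‖φ‖_r^r+‖ψ‖_r^r)‖φ-ψ‖_r^r). In particular G is continuous on L^p ∩ L^q. -/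

import Mathlib

open MeasureTheory

private lemma sqrt_mul_le_half (a b : ℝ) (ha : 0 ≤ a) (hb : 0 ≤ b) :
    Real.sqrt (a * b) ≤ (a + b) / 2 := by
  rw [Real.sqrt_mul ha]
  have h1 := Real.sq_sqrt ha
  have h2 := Real.sq_sqrt hb
  nlinarith [sq_nonneg (Real.sqrt a - Real.sqrt b), Real.sqrt_nonneg a, Real.sqrt_nonneg b]

private lemma cs_aux {α : Type*} [MeasurableSpace α] {μ : Measure α} {u v : α → ℝ}
    (hum : AEStronglyMeasurable u μ) (hvm : AEStronglyMeasurable v μ)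
    (hu : Integrable u μ) (hv : Integrable v μ)
    (hu0 : ∀ x, 0 ≤ u x) (hv0 : ∀ x, 0 ≤ v x) :
    Integrable (fun x => Real.sqrt (u x * v x)) μ ∧
    ∫ x, Real.sqrt (u x * v x) ∂μ ≤ Real.sqrt ((∫ x, u x ∂μ) * ∫ x, v x ∂μ) := by
  have hsum : AEStronglyMeasurable (fun x => Real.sqrt (u x * v x)) μ :=
    Real.continuous_sqrt.comp_aestronglyMeasurable (hum.mul hvm)
  have hint : Integrable (fun x => Real.sqrt (u x * v x)) μ := by
    refine Integrable.mono' (((hu.add hv).div_const 2)) hsum ?_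
    filter_upwards with x
    rw [Real.norm_of_nonneg (Real.sqrt_nonneg _)]
    exact sqrt_mul_le_half _ _ (hu0 x) (hv0 x)
  refine ⟨hint, ?_⟩
  have hpq : Real.HolderConjugate 2 2 := ⟨by norm_num, by norm_num, by norm_num⟩
  have hsq : ∀ y : ℝ, 0 ≤ y → (Real.sqrt y) ^ (2 : ℝ) = y := fun y hy => by
    rw [show (2 : ℝ) = ((2 : ℕ) : ℝ) by norm_num, Real.rpow_natCast, Real.sq_sqrt hy]
  have hmu : MemLp (fun x => Real.sqrt (u x)) (ENNReal.ofReal 2) μ := by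
    rw [show ENNReal.ofReal 2 = 2 by norm_num]
    refine (memLp_two_iff_integrable_sq
      (Real.continuous_sqrt.comp_aestronglyMeasurable hum)).2 ?_
    exact hu.congr (Filter.Eventually.of_forall fun x => (Real.sq_sqrt (hu0 x)).symm)
  have hmv : MemLp (fun x => Real.sqrt (v x)) (ENNReal.ofReal 2) μ := by
    rw [show ENNReal.ofReal 2 = 2 by norm_num]
    refine (memLp_two_iff_integrable_sq
      (Real.continuous_sqrt.comp_aestronglyMeasurable hvm)).2 ?_
    exact hv.congr (Filter.Eventually.of_forall fun x => (Real.sq_sqrt (hv0 x)).symm)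
  have key := integral_mul_le_Lp_mul_Lq_of_nonneg hpq
    (Filter.Eventually.of_forall fun x => Real.sqrt_nonneg (u x))
    (Filter.Eventually.of_forall fun x => Real.sqrt_nonneg (v x)) hmu hmv
  have e1 : ∫ x, Real.sqrt (u x * v x) ∂μ
      = ∫ x, Real.sqrt (u x) * Real.sqrt (v x) ∂μ := by
    exact integral_congr_ae (Filter.Eventually.of_forall fun x => Real.sqrt_mul (hu0 x) (v x))
  have e2 : ∫ x, (Real.sqrt (u x)) ^ (2 : ℝ) ∂μ = ∫ x, u x ∂μ :=
    integral_congr_ae (Filter.Eventually.of_forall fun x => hsq _ (hu0 x))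
  have e3 : ∫ x, (Real.sqrt (v x)) ^ (2 : ℝ) ∂μ = ∫ x, v x ∂μ :=
    integral_congr_ae (Filter.Eventually.of_forall fun x => hsq _ (hv0 x))
  rw [e1]
  calc ∫ x, Real.sqrt (u x) * Real.sqrt (v x) ∂μ
      ≤ (∫ x, (Real.sqrt (u x)) ^ (2:ℝ) ∂μ) ^ (1/2:ℝ) *
        (∫ x, (Real.sqrt (v x)) ^ (2:ℝ) ∂μ) ^ (1/2:ℝ) := key
    _ = Real.sqrt ((∫ x, u x ∂μ) * ∫ x, v x ∂μ) := by
        rw [e2, e3, Real.sqrt_mul (integral_nonneg hu0), Real.sqrt_eq_rpow,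
          Real.sqrt_eq_rpow]

private lemma abs_sub_rpow_le (x y p : ℝ) (hp : 0 < p) :
    |x - y| ^ p ≤ 2 ^ p * (|x| ^ p + |y| ^ p) := by
  have h1 : |x - y| ≤ 2 * max |x| |y| := by
    calc |x - y| ≤ |x| + |y| := abs_sub x y
      _ ≤ max |x| |y| + max |x| |y| := add_le_add (le_max_left _ _) (le_max_right _ _)
      _ = 2 * max |x| |y| := by ring
  calc |x - y| ^ p ≤ (2 * max |x| |y|) ^ p :=
        Real.rpow_le_rpow (abs_nonneg _) h1 hp.le
    _ = 2 ^ p * (max |x| |y|) ^ p := by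
        rw [Real.mul_rpow (by norm_num) (le_trans (abs_nonneg x) (le_max_left _ _))]
    _ ≤ 2 ^ p * (|x| ^ p + |y| ^ p) := by
        refine mul_le_mul_of_nonneg_left ?_ (Real.rpow_nonneg (by norm_num) p)
        rcases max_cases |x| |y| with ⟨h, _⟩ | ⟨h, _⟩ <;> rw [h]
        · exact le_add_of_nonneg_right (Real.rpow_nonneg (abs_nonneg _) p)
        · exact le_add_of_nonneg_left (Real.rpow_nonneg (abs_nonneg _) p)

theorem stmt10 (d : ℕ) (p q κ₁ κ₂ : ℝ) (hp : 0 < p) (hpq : p ≤ q) (hq2 : q ≤ 2)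
    (hκ₁ : 0 ≤ κ₁) (hκ₂ : 0 ≤ κ₂)
    (g : ℝ → ℂ) (hgm : Measurable g) (hg0 : g 0 = 0)
    (hglip : ∀ ω₁ ω₂ : ℝ,
      ‖g ω₂ - g ω₁‖ ≤
        κ₁ * Real.sqrt ((|ω₁| ^ p + |ω₂| ^ p) * |ω₁ - ω₂| ^ p) +
          κ₂ * Real.sqrt ((|ω₁| ^ q + |ω₂| ^ q) * |ω₁ - ω₂| ^ q))
    (φ ψ : EuclideanSpace ℝ (Fin d) → ℝ) (hφ : Measurable φ) (hψ : Measurable ψ)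
    (hφp : Integrable (fun r => |φ r| ^ p)) (hφq : Integrable (fun r => |φ r| ^ q))
    (hψp : Integrable (fun r => |ψ r| ^ p)) (hψq : Integrable (fun r => |ψ r| ^ q)) :
    Integrable (fun r => g (φ r)) ∧
      ‖(∫ r, g (φ r)) - ∫ r, g (ψ r)‖ ≤
        κ₁ * Real.sqrt ((((∫ r, |φ r| ^ p) + ∫ r, |ψ r| ^ p)) * ∫ r, |φ r - ψ r| ^ p) +
          κ₂ * Real.sqrt ((((∫ r, |φ r| ^ q) + ∫ r, |ψ r| ^ q)) * ∫ r, |φ r - ψ r| ^ q) := by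
  have hq : 0 < q := lt_of_lt_of_le hp hpq
  -- pointwise bound on g
  have hgbd : ∀ ω : ℝ, ‖g ω‖ ≤ κ₁ * |ω| ^ p + κ₂ * |ω| ^ q := by
    intro ω
    have := hglip 0 ω
    simpa [hg0, Real.zero_rpow hp.ne', Real.zero_rpow hq.ne',
      Real.sqrt_mul_self (Real.rpow_nonneg (abs_nonneg ω) _)] using this
  -- integrability of g ∘ φ, g ∘ ψ
  have hgint : ∀ (f : EuclideanSpace ℝ (Fin d) → ℝ), Measurable f →
      Integrable (fun r => |f r| ^ p) → Integrable (fun r => |f r| ^ q) →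
      Integrable fun r => g (f r) := by
    intro f hf hfp hfq
    refine Integrable.mono' ((hfp.const_mul κ₁).add (hfq.const_mul κ₂))
      (hgm.comp hf).aestronglyMeasurable ?_
    filter_upwards with r
    simpa using hgbd (f r)
  have hgφ := hgint φ hφ hφp hφq
  have hgψ := hgint ψ hψ hψp hψq
  refine ⟨hgφ, ?_⟩
  -- integrability of |φ - ψ| ^ r
  have hsubint : ∀ (s : ℝ), 0 < s → Integrable (fun r => |φ r| ^ s) →
      Integrable (fun r => |ψ r| ^ s) → Integrable (fun r => |φ r - ψ r| ^ s) := by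
    intro s hs h1 h2
    refine Integrable.mono' ((h1.add h2).const_mul (2 ^ s))
      (((hφ.sub hψ).abs.pow_const s).aestronglyMeasurable) ?_
    filter_upwards with r
    rw [Real.norm_of_nonneg (Real.rpow_nonneg (abs_nonneg _) _)]
    exact abs_sub_rpow_le _ _ _ hs
  have hdp := hsubint p hp hφp hψp
  have hdq := hsubint q hq hφq hψq
  -- Cauchy-Schwarz for each exponent
  have csp := cs_aux (u := fun r => |φ r| ^ p + |ψ r| ^ p) (v := fun r => |φ r - ψ r| ^ p)
    ((hφ.abs.pow_const p).add (hψ.abs.pow_const p)).aestronglyMeasurable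
    ((hφ.sub hψ).abs.pow_const p).aestronglyMeasurable (hφp.add hψp) hdp
    (fun x => add_nonneg (Real.rpow_nonneg (abs_nonneg _) _) (Real.rpow_nonneg (abs_nonneg _) _))
    (fun x => Real.rpow_nonneg (abs_nonneg _) _)
  have csq := cs_aux (u := fun r => |φ r| ^ q + |ψ r| ^ q) (v := fun r => |φ r - ψ r| ^ q)
    ((hφ.abs.pow_const q).add (hψ.abs.pow_const q)).aestronglyMeasurable
    ((hφ.sub hψ).abs.pow_const q).aestronglyMeasurable (hφq.add hψq) hdq
    (fun x => add_nonneg (Real.rpow_nonneg (abs_nonneg _) _) (Real.rpow_nonneg (abs_nonneg _) _))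
    (fun x => Real.rpow_nonneg (abs_nonneg _) _)
  have hIp : Integrable (fun r => Real.sqrt ((|φ r| ^ p + |ψ r| ^ p) * |φ r - ψ r| ^ p)) := csp.1
  have hIq : Integrable (fun r => Real.sqrt ((|φ r| ^ q + |ψ r| ^ q) * |φ r - ψ r| ^ q)) := csq.1
  calc ‖(∫ r, g (φ r)) - ∫ r, g (ψ r)‖
      = ‖∫ r, (g (φ r) - g (ψ r))‖ := by
        rw [integral_sub hgφ hgψ]
    _ ≤ ∫ r, ‖g (φ r) - g (ψ r)‖ := norm_integral_le_integral_norm _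
    _ ≤ ∫ r, (κ₁ * Real.sqrt ((|φ r| ^ p + |ψ r| ^ p) * |φ r - ψ r| ^ p)
          + κ₂ * Real.sqrt ((|φ r| ^ q + |ψ r| ^ q) * |φ r - ψ r| ^ q)) := by
        refine integral_mono (hgφ.sub hgψ).norm
          ((hIp.const_mul κ₁).add (hIq.const_mul κ₂)) fun r => ?_
        have := hglip (ψ r) (φ r)
        simpa [add_comm (|ψ r| ^ p) (|φ r| ^ p),
          add_comm (|ψ r| ^ q) (|φ r| ^ q), abs_sub_comm (ψ r) (φ r)] using this
    _ = κ₁ * (∫ r, Real.sqrt ((|φ r| ^ p + |ψ r| ^ p) * |φ r - ψ r| ^ p))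
          + κ₂ * (∫ r, Real.sqrt ((|φ r| ^ q + |ψ r| ^ q) * |φ r - ψ r| ^ q)) := by
        rw [integral_add (hIp.const_mul κ₁) (hIq.const_mul κ₂),
          integral_const_mul, integral_const_mul]
    _ ≤ κ₁ * Real.sqrt ((((∫ r, |φ r| ^ p) + ∫ r, |ψ r| ^ p)) * ∫ r, |φ r - ψ r| ^ p)
          + κ₂ * Real.sqrt ((((∫ r, |φ r| ^ q) + ∫ r, |ψ r| ^ q)) * ∫ r, |φ r - ψ r| ^ q) := by
        refine add_le_add (mul_le_mul_of_nonneg_left ?_ hκ₁)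
          (mul_le_mul_of_nonneg_left ?_ hκ₂)
        · calc _ ≤ _ := csp.2
          _ = _ := by rw [integral_add hφp hψp]
        · calc _ ≤ _ := csq.2
          _ = _ := by rw [integral_add hφq hψq]
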